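/- If a₁,…,aₙ is a regular sequence of elements of positive degree in the polynomial ring ℚ[x₁,…,xₙ] (n variables), then the quotient ℚ[x₁,…,xₙ]/(a₁,…,aₙ) is a finite-dimensional ℚ-vector space. -/

import Mathlib

set_option maxHeartbeats 1000000
set_option synthInstance.maxHeartbeats 400000

open MvPolynomial

/-- `a` is a regular sequence in the commutative ring `R`: for each `i`,
`a i` is a non-zero-divisor in the quotient of `R` by the ideal generated by
the previous terms `a j`, `j < i`. -/
def IsRegularSeq {R : Type*} [CommRing R] {p : ℕ} (a : Fin p → R) : Prop :=
  ∀ i : Fin p, ∀ c : R,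
    a i * c ∈ Ideal.span (a '' {j | j < i}) → c ∈ Ideal.span (a '' {j | j < i})

lemma totalDegree_aeval_le {n m : ℕ} (f : Fin m → MvPolynomial (Fin n) ℚ) (d : ℕ)
    (hf : ∀ i, (f i).totalDegree ≤ d) (p : MvPolynomial (Fin m) ℚ) :
    (aeval f p).totalDegree ≤ p.totalDegree * d := by
  rw [aeval_def, eval₂_eq]
  refine (totalDegree_finset_sum _ _).trans (Finset.sup_le ?_)
  intro s hs
  refine (totalDegree_mul _ _).trans ?_
  have h1 : (algebraMap ℚ (MvPolynomial (Fin n) ℚ) (coeff s p)).totalDegree = 0 :=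
    totalDegree_C _
  rw [h1, zero_add]
  refine (totalDegree_finset_prod _ _).trans ?_
  calc ∑ i ∈ s.support, (f i ^ s i).totalDegree
      ≤ ∑ i ∈ s.support, s i * d := by
        refine Finset.sum_le_sum fun i _ => ?_
        exact (totalDegree_pow _ _).trans (Nat.mul_le_mul_left _ (hf i))
    _ = (∑ i ∈ s.support, s i) * d := by rw [Finset.sum_mul]
    _ ≤ p.totalDegree * d := Nat.mul_le_mul_right _ (le_totalDegree hs)

lemma mem_span_monomials {n D : ℕ} (q : MvPolynomial (Fin n) ℚ) (hq : q.totalDegree ≤ D) :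
    q ∈ Submodule.span ℚ
      (Set.range fun h : Fin n → Fin (D + 1) =>
        (monomial (Finsupp.equivFunOnFinite.symm fun i => ((h i : ℕ))) (1 : ℚ) :
          MvPolynomial (Fin n) ℚ)) := by
  classical
  have hrepr := q.support_sum_monomial_coeff
  rw [← hrepr]
  refine Submodule.sum_mem _ fun s hs => ?_
  have hsD : ∀ i, s i ≤ D := by
    intro i
    by_cases h : s i = 0
    · omega
    · have hi : i ∈ s.support := Finsupp.mem_support_iff.mpr h
      have : s i ≤ s.sum fun _ e => e := by
        rw [Finsupp.sum]
        exact Finset.single_le_sum (fun j _ => Nat.zero_le _) hi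
      exact this.trans ((le_totalDegree hs).trans hq)
  have : (monomial s (coeff s q) : MvPolynomial (Fin n) ℚ)
      = (coeff s q) • monomial s 1 := by
    rw [smul_monomial, smul_eq_mul, mul_one]
  rw [this]
  refine Submodule.smul_mem _ _ (Submodule.subset_span ?_)
  refine ⟨fun i => ⟨s i, Nat.lt_succ_of_le (hsD i)⟩, ?_⟩
  show monomial (Finsupp.equivFunOnFinite.symm ⇑s) 1 = monomial s 1
  rw [Finsupp.equivFunOnFinite_symm_coe]

lemma not_algIndep_succ (n : ℕ) (f : Fin (n + 1) → MvPolynomial (Fin n) ℚ) :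
    ¬ AlgebraicIndependent ℚ f := by
  intro hind
  classical
  obtain ⟨d, hd1, hd⟩ : ∃ d, 1 ≤ d ∧ ∀ i, (f i).totalDegree ≤ d :=
    ⟨max 1 (Finset.univ.sup fun i => (f i).totalDegree), le_max_left _ _,
      fun i => le_trans (Finset.le_sup (f := fun i => (f i).totalDegree)
        (Finset.mem_univ i)) (le_max_right _ _)⟩
  set c : ℕ := (n + 1) * d + 1 with hc
  set M : ℕ := c ^ n + 1 with hM
  set D : ℕ := (n + 1) * (M - 1) * d with hD
  set e : (Fin (n + 1) → Fin M) → ((Fin (n + 1)) →₀ ℕ) :=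
    fun g => Finsupp.equivFunOnFinite.symm fun i => (g i : ℕ) with he
  have he_inj : Function.Injective e := by
    intro g g' h
    funext i
    exact Fin.ext (congrFun (Finsupp.equivFunOnFinite.symm.injective h) i)
  have hu_li : LinearIndependent ℚ
      (fun g : Fin (n + 1) → Fin M => (monomial (e g) (1 : ℚ))) := by
    have h0 := ((basisMonomials (Fin (n + 1)) ℚ).linearIndependent).comp e he_inj
    have : (⇑(basisMonomials (Fin (n + 1)) ℚ) ∘ e)
        = fun g => (monomial (e g) (1 : ℚ)) := by
      funext g; simp [coe_basisMonomials]
    rwa [this] at h0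
  -- map by aeval f
  have haev : Function.Injective (aeval f : MvPolynomial (Fin (n + 1)) ℚ →ₐ[ℚ] _) :=
    algebraicIndependent_iff_injective_aeval.mp hind
  have hv_li : LinearIndependent ℚ
      (fun g : Fin (n + 1) → Fin M => aeval f (monomial (e g) (1 : ℚ))) := by
    have := hu_li.map' (aeval f).toLinearMap ?_
    · exact this
    · rw [LinearMap.ker_eq_bot]; exact haev
  -- images lie in the span W
  set W := Submodule.span ℚ
      (Set.range fun h : Fin n → Fin (D + 1) =>
        (monomial (Finsupp.equivFunOnFinite.symm fun i => ((h i : ℕ))) (1 : ℚ) :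
          MvPolynomial (Fin n) ℚ)) with hW
  have hmem : ∀ g : Fin (n + 1) → Fin M, aeval f (monomial (e g) (1 : ℚ)) ∈ W := by
    intro g
    refine mem_span_monomials _ ?_
    refine (totalDegree_aeval_le f d hd _).trans ?_
    refine Nat.mul_le_mul_right _ ?_
    have : (monomial (e g) (1 : ℚ)).totalDegree = (e g).sum fun _ m => m := by
      rw [totalDegree_monomial _ (one_ne_zero)]
    rw [this]
    have : ((e g).sum fun _ m => m) ≤ (n + 1) * (M - 1) := by
      rw [Finsupp.sum]
      calc ∑ i ∈ (e g).support, e g i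
          ≤ ∑ _i : Fin (n + 1), (M - 1) := by
            refine (Finset.sum_le_sum_of_subset (Finset.subset_univ _)).trans ?_
            refine Finset.sum_le_sum fun i _ => ?_
            have : (g i : ℕ) < M := (g i).2
            have he' : e g i = (g i : ℕ) := rfl
            omega
        _ = (n + 1) * (M - 1) := by simp [Finset.sum_const, mul_comm]
    exact this
  -- conclude cardinality contradiction
  have hfd : FiniteDimensional ℚ W := FiniteDimensional.span_of_finite _ (Set.finite_range _)
  have hcard : Fintype.card (Fin (n + 1) → Fin M) ≤ Module.finrank ℚ W := by
    set v' : (Fin (n + 1) → Fin M) → W := fun g => ⟨_, hmem g⟩ with hv'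
    have : LinearIndependent ℚ v' := by
      refine LinearIndependent.of_comp W.subtype ?_
      exact hv_li
    exact this.fintype_card_le_finrank
  have hrank : Module.finrank ℚ W ≤ (D + 1) ^ n := by
    refine (finrank_range_le_card _).trans ?_
    simp [Fintype.card_fun]
  rw [Fintype.card_fun] at hcard
  simp only [Fintype.card_fin] at hcard
  -- numeric contradiction : M ^ (n+1) ≤ (D+1)^n < M^(n+1)
  have hnum : (D + 1) ^ n < M ^ (n + 1) := by
    have h1 : D + 1 ≤ c * M := by
      have : (n + 1) * (M - 1) * d + 1 ≤ (n + 1) * M * d + 1 := by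
        have h := Nat.sub_le M 1
        exact Nat.add_le_add_right
          (Nat.mul_le_mul_right _ (Nat.mul_le_mul_left _ h)) 1
      calc D + 1 ≤ (n + 1) * M * d + 1 := this
        _ ≤ (n + 1) * M * d + M := by omega
        _ = ((n + 1) * d + 1) * M := by ring
        _ = c * M := rfl
    calc (D + 1) ^ n ≤ (c * M) ^ n := Nat.pow_le_pow_left h1 n
      _ = c ^ n * M ^ n := by rw [mul_pow]
      _ < M * M ^ n := by
          refine Nat.mul_lt_mul_of_lt_of_le ?_ le_rfl ?_
          · omega
          · positivity
      _ = M ^ (n + 1) := by ring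
  omega

lemma algIndep_extend {A : Type*} [CommRing A] [IsDomain A] [Algebra ℚ A]
    {ι : Type*} (y : ι → A) (q : Ideal A) [q.IsPrime] (f : A)
    (hfq : f ∈ q) (hf0 : f ≠ 0)
    (hy : AlgebraicIndependent ℚ (fun i => Ideal.Quotient.mk q (y i))) :
    AlgebraicIndependent ℚ (fun o : Option ι => o.elim f y) := by
  have hy' : AlgebraicIndependent ℚ y := by
    refine AlgebraicIndependent.of_comp (Ideal.Quotient.mkₐ ℚ q) ?_
    exact hy
  rw [hy'.option_iff_transcendental]
  rintro ⟨P, hP0, hPf⟩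
  -- strong induction on natDegree
  have key : ∀ m : ℕ, ∀ P : Polynomial (Algebra.adjoin ℚ (Set.range y)),
      P.natDegree ≤ m → P ≠ 0 → Polynomial.aeval f P ≠ 0 := by
    intro m
    induction m with
    | zero =>
      intro P hdeg hne habs
      -- P is a constant C c with c ≠ 0
      have hc : P = Polynomial.C (P.coeff 0) := Polynomial.eq_C_of_natDegree_eq_zero
        (Nat.le_zero.mp hdeg)
      rw [hc, Polynomial.aeval_C] at habs
      have hc0 : P.coeff 0 ≠ 0 := fun h => hne (by rw [hc, h, map_zero])
      -- algebraMap from subalgebra to A is injective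
      have : (P.coeff 0 : A) = 0 := habs
      exact hc0 (Subtype.ext this)
    | succ m ih =>
      intro P hdeg hne habs
      -- constant coefficient must be zero
      have hsplit := Polynomial.X_mul_divX_add P
      have h1 : f * Polynomial.aeval f P.divX +
          algebraMap (Algebra.adjoin ℚ (Set.range y)) A (P.coeff 0) = 0 := by
        have h := congrArg (Polynomial.aeval f) hsplit
        rw [map_add, map_mul, Polynomial.aeval_X, Polynomial.aeval_C, habs] at h
        exact h
      have hcq : (P.coeff 0 : A) ∈ q := by
        have hcoe : algebraMap (Algebra.adjoin ℚ (Set.range y)) A (P.coeff 0)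
            = (P.coeff 0 : A) := rfl
        rw [hcoe] at h1
        have h2 : (P.coeff 0 : A) = -(f * Polynomial.aeval f P.divX) :=
          eq_neg_of_add_eq_zero_right h1
        rw [h2]
        exact neg_mem (Ideal.mul_mem_right _ _ hfq)
      -- use algebraic independence mod q to conclude coeff 0 = 0
      have hc0 : P.coeff 0 = 0 := by
        set c := P.coeff 0 with hc
        have hrepr : aeval y (hy'.repr c) = (c : A) := hy'.aeval_repr c
        have hmk : aeval (fun i => Ideal.Quotient.mk q (y i)) (hy'.repr c) = 0 := by
          have : (Ideal.Quotient.mkₐ ℚ q).comp (aeval y) =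
              aeval (fun i => Ideal.Quotient.mk q (y i)) := by
            rw [comp_aeval]; rfl
          calc aeval (fun i => Ideal.Quotient.mk q (y i)) (hy'.repr c)
              = (Ideal.Quotient.mkₐ ℚ q) (aeval y (hy'.repr c)) := by
                rw [← this]; rfl
            _ = 0 := by
                rw [hrepr]
                exact Ideal.Quotient.eq_zero_iff_mem.mpr hcq
        have hinj := algebraicIndependent_iff_injective_aeval.mp hy
        have : hy'.repr c = 0 := by
          apply hinj
          rw [hmk, map_zero]
        have : (c : A) = 0 := by rw [← hrepr, this, map_zero]
        exact Subtype.ext this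
      -- then P = X * P.divX
      rw [hc0, map_zero, add_zero] at hsplit
      have hdivne : P.divX ≠ 0 := by
        intro h
        rw [h, mul_zero] at hsplit
        exact hne hsplit.symm
      have hdivdeg : P.divX.natDegree ≤ m := by
        have h2 := Polynomial.natDegree_divX_eq_natDegree_tsub_one (p := P)
        omega
      have haevdiv : Polynomial.aeval f P.divX = 0 := by
        have : f * Polynomial.aeval f P.divX = 0 := by
          have := congrArg (Polynomial.aeval f) hsplit
          simpa [map_mul, Polynomial.aeval_X, habs] using this
        rcases mul_eq_zero.mp this with h | h
        · exact absurd h hf0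
        · exact h
      exact ih P.divX hdivdeg hdivne haevdiv
  exact key P.natDegree P le_rfl hP0 hPf

-- An element of a minimal prime of a commutative ring is a zero divisor.
lemma zd_of_mem_minimalPrime {A : Type*} [CommRing A] {p : Ideal A}
    (hp : p ∈ minimalPrimes A) {x : A} (hx : x ∈ p) :
    ∃ c : A, c ≠ 0 ∧ x * c = 0 := by
  haveI hpp : p.IsPrime := hp.1.1
  set S := Localization p.primeCompl
  have hmem : algebraMap A S x ∈ IsLocalRing.maximalIdeal S :=
    (IsLocalization.AtPrime.to_map_mem_maximal_iff S p x).mpr hx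
  have hnil : IsNilpotent (algebraMap A S x) :=
    by
      have h := IsLocalization.AtPrime.radical_map_of_mem_minimalPrimes (A := S) p ⊥ hp
      have h' : algebraMap A S x ∈ ((⊥ : Ideal A).map (algebraMap A S)).radical :=
        h ▸ Ideal.mem_map_of_mem _ hx
      rw [Ideal.map_bot] at h'
      obtain ⟨k, hk⟩ := h'
      exact ⟨k, Ideal.mem_bot.mp hk⟩
  obtain ⟨k, hk⟩ := hnil
  rw [← map_pow] at hk
  obtain ⟨m, hm⟩ := (IsLocalization.map_eq_zero_iff p.primeCompl S _).mp hk
  -- now (m : A) * x ^ k = 0 with m ∉ p ; induct on k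
  clear hk hmem
  induction k with
  | zero =>
    exfalso
    rw [pow_zero, mul_one] at hm
    exact m.2 (hm ▸ p.zero_mem)
  | succ k ih =>
    by_cases h : (m : A) * x ^ k = 0
    · exact ih h
    · refine ⟨(m : A) * x ^ k, h, ?_⟩
      rw [pow_succ] at hm
      linear_combination hm

lemma zd_of_mem_minimalPrime_rel {R : Type*} [CommRing R] {I p : Ideal R}
    (hp : p ∈ I.minimalPrimes) {x : R} (hx : x ∈ p) :
    ∃ c : R, c ∉ I ∧ x * c ∈ I := by
  haveI hpp : p.IsPrime := hp.1.1
  have hIp : I ≤ p := hp.1.2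
  set A := R ⧸ I
  set π : R →+* A := Ideal.Quotient.mk I
  have hsurj : Function.Surjective π := Ideal.Quotient.mk_surjective
  obtain ⟨p', hp', hpe⟩ : ∃ p' ∈ minimalPrimes A, Ideal.comap π p' = p := by
    have h := Ideal.minimalPrimes_eq_comap (I := I)
    rw [h] at hp
    obtain ⟨p', h1, h2⟩ := hp
    exact ⟨p', h1, h2⟩
  have hxm : π x ∈ p' := by
    rw [← hpe] at hx
    exact hx
  obtain ⟨c', hc'0, hc'⟩ := zd_of_mem_minimalPrime hp' hxm
  obtain ⟨c, rfl⟩ := hsurj c'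
  refine ⟨c, ?_, ?_⟩
  · intro hcI
    exact hc'0 (Ideal.Quotient.eq_zero_iff_mem.mpr hcI)
  · rw [← map_mul] at hc'
    exact Ideal.Quotient.eq_zero_iff_mem.mp hc'

lemma chain_lemma (n : ℕ) (a : Fin n → MvPolynomial (Fin n) ℚ)
    (hreg : IsRegularSeq a) :
    ∀ k : ℕ, k ≤ n → ∀ P : Ideal (MvPolynomial (Fin n) ℚ), P.IsPrime →
      Ideal.span (a '' {j | (j : ℕ) < k}) ≤ P →
      ∀ (m : ℕ) (y : Fin m → MvPolynomial (Fin n) ℚ),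
        AlgebraicIndependent ℚ (fun i => Ideal.Quotient.mk P (y i)) →
        ∃ y' : Fin (m + k) → MvPolynomial (Fin n) ℚ, AlgebraicIndependent ℚ y' := by
  intro k
  induction k with
  | zero =>
    intro _ P hP _ m y hy
    exact ⟨y, AlgebraicIndependent.of_comp (Ideal.Quotient.mkₐ ℚ P) hy⟩
  | succ k ih =>
    intro hk P hP hsub m y hy
    haveI := hP
    have hkn : k < n := hk
    have hsetsub : {j : Fin n | (j : ℕ) < k} ⊆ {j : Fin n | (j : ℕ) < k + 1} :=
      fun j hj => Nat.lt_succ_of_lt hj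
    have hIkP : Ideal.span (a '' {j : Fin n | (j : ℕ) < k}) ≤ P :=
      le_trans (Ideal.span_mono (Set.image_mono (f := a) hsetsub)) hsub
    obtain ⟨Q, hQ, hQP⟩ := Ideal.exists_minimalPrimes_le hIkP
    haveI hQprime : Q.IsPrime := hQ.1.1
    have haP : a ⟨k, hkn⟩ ∈ P :=
      hsub (Ideal.subset_span ⟨⟨k, hkn⟩, Nat.lt_succ_self k, rfl⟩)
    have hset : {j : Fin n | j < (⟨k, hkn⟩ : Fin n)} = {j : Fin n | (j : ℕ) < k} := rfl
    have haQ : a ⟨k, hkn⟩ ∉ Q := by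
      intro habs
      obtain ⟨c, hc1, hc2⟩ := zd_of_mem_minimalPrime_rel hQ habs
      refine hc1 ?_
      have h3 := hreg ⟨k, hkn⟩ c (by rw [hset]; exact hc2)
      rwa [hset] at h3
    -- quotient by Q
    haveI hqprime : (P.map (Ideal.Quotient.mkₐ ℚ Q)).IsPrime := by
      refine Ideal.map_isPrime_of_surjective (Ideal.Quotient.mkₐ_surjective ℚ Q) ?_
      show RingHom.ker (Ideal.Quotient.mkₐ ℚ Q :
        MvPolynomial (Fin n) ℚ →+* MvPolynomial (Fin n) ℚ ⧸ Q) ≤ P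
      rw [Ideal.Quotient.mkₐ_ker]
      exact hQP
    have hfq : Ideal.Quotient.mkₐ ℚ Q (a ⟨k, hkn⟩) ∈ P.map (Ideal.Quotient.mkₐ ℚ Q) :=
      Ideal.mem_map_of_mem _ haP
    have hf0 : Ideal.Quotient.mkₐ ℚ Q (a ⟨k, hkn⟩) ≠ 0 := by
      intro h
      rw [Ideal.Quotient.mkₐ_eq_mk] at h
      exact haQ (Ideal.Quotient.eq_zero_iff_mem.mp h)
    have hzind : AlgebraicIndependent ℚ (fun i' =>
        Ideal.Quotient.mk (P.map (Ideal.Quotient.mkₐ ℚ Q))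
          (Ideal.Quotient.mkₐ ℚ Q (y i'))) := by
      refine AlgebraicIndependent.of_comp
        (DoubleQuot.quotQuotEquivQuotOfLEₐ ℚ hQP).toAlgHom ?_
      have hfun : (⇑(DoubleQuot.quotQuotEquivQuotOfLEₐ ℚ hQP).toAlgHom ∘ fun i' =>
          Ideal.Quotient.mk (P.map (Ideal.Quotient.mkₐ ℚ Q))
            (Ideal.Quotient.mkₐ ℚ Q (y i')))
          = fun i' => Ideal.Quotient.mk P (y i') := by
        funext i'
        show (DoubleQuot.quotQuotEquivQuotOfLEₐ ℚ hQP) _ = _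
        rw [DoubleQuot.coe_quotQuotEquivQuotOfLEₐ]
        exact DoubleQuot.quotQuotEquivQuotOfLE_quotQuotMk (y i') hQP
      rw [hfun]
      exact hy
    have hext := algIndep_extend (fun i' => Ideal.Quotient.mkₐ ℚ Q (y i'))
      (P.map (Ideal.Quotient.mkₐ ℚ Q)) (Ideal.Quotient.mkₐ ℚ Q (a ⟨k, hkn⟩))
      hfq hf0 hzind
    have hw : AlgebraicIndependent ℚ
        ((fun o : Option (Fin m) => o.elim (Ideal.Quotient.mkₐ ℚ Q (a ⟨k, hkn⟩))
          (fun i' => Ideal.Quotient.mkₐ ℚ Q (y i'))) ∘ (finSuccEquiv m)) :=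
      (algebraicIndependent_equiv (finSuccEquiv m)).mpr hext
    have hlift : ∀ i' : Fin (m + 1), ∃ r : MvPolynomial (Fin n) ℚ,
        Ideal.Quotient.mk Q r =
          ((fun o : Option (Fin m) => o.elim (Ideal.Quotient.mkₐ ℚ Q (a ⟨k, hkn⟩))
            (fun i' => Ideal.Quotient.mkₐ ℚ Q (y i'))) ∘ (finSuccEquiv m)) i' :=
      fun i' => Ideal.Quotient.mk_surjective _
    choose y2 hy2 using hlift
    have hy2ind : AlgebraicIndependent ℚ (fun i' => Ideal.Quotient.mk Q (y2 i')) := by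
      have h4 : (fun i' => Ideal.Quotient.mk Q (y2 i')) = _ := funext hy2
      rw [h4]
      exact hw
    obtain ⟨y', hy'⟩ := ih (le_of_lt hk) Q hQprime hQ.1.2 (m + 1) y2 hy2ind
    refine ⟨y' ∘ finCongr (by omega : m + (k + 1) = m + 1 + k), ?_⟩
    exact (algebraicIndependent_equiv (finCongr _)).mpr hy'

lemma all_algebraic (n : ℕ) (a : Fin n → MvPolynomial (Fin n) ℚ)
    (hreg : IsRegularSeq a) (P : Ideal (MvPolynomial (Fin n) ℚ)) (hP : P.IsPrime)
    (hIP : Ideal.span (Set.range a) ≤ P) (u : MvPolynomial (Fin n) ℚ) :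
    IsAlgebraic ℚ (Ideal.Quotient.mk P u) := by
  by_contra htrans
  haveI := hP
  have hy : AlgebraicIndependent ℚ (fun _ : Fin 1 => Ideal.Quotient.mk P u) :=
    algebraicIndependent_unique_type_iff.mpr htrans
  have hrange : a '' {j : Fin n | (j : ℕ) < n} = Set.range a := by
    have : {j : Fin n | (j : ℕ) < n} = Set.univ := by
      ext j; simp [j.isLt]
    rw [this, Set.image_univ]
  have hspan : Ideal.span (a '' {j : Fin n | (j : ℕ) < n}) ≤ P := by
    rw [hrange]; exact hIP
  obtain ⟨y', hy'⟩ := chain_lemma n a hreg n le_rfl P hP hspan 1 (fun _ => u) hy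
  exact not_algIndep_succ n (y' ∘ finCongr (by omega : n + 1 = 1 + n))
    ((algebraicIndependent_equiv (finCongr _)).mpr hy')

lemma stmt8_aux (n : ℕ) (a : Fin n → MvPolynomial (Fin n) ℚ)
    (hreg : IsRegularSeq a) :
    FiniteDimensional ℚ
      (MvPolynomial (Fin n) ℚ ⧸ Ideal.span (Set.range a)) := by
  classical
  haveI : IsNoetherianRing (MvPolynomial (Fin n) ℚ ⧸ Ideal.span (Set.range a)) :=
    isNoetherianRing_of_surjective (MvPolynomial (Fin n) ℚ) _
      (Ideal.Quotient.mk (Ideal.span (Set.range a))) Ideal.Quotient.mk_surjective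
  set I : Ideal (MvPolynomial (Fin n) ℚ) := Ideal.span (Set.range a) with hIdef
  set r : Fin n → (MvPolynomial (Fin n) ℚ ⧸ I) :=
    fun j => Ideal.Quotient.mkₐ ℚ I (X j) with hr
  -- each r j is algebraic over ℚ
  have halg : ∀ j, IsAlgebraic ℚ (r j) := by
    intro j
    have hstep : ∀ p ∈ minimalPrimes (MvPolynomial (Fin n) ℚ ⧸ I),
        ∃ g : Polynomial ℚ, g ≠ 0 ∧ Polynomial.aeval (r j) g ∈ p := by
      intro p hp
      haveI hpprime : p.IsPrime := hp.1.1
      haveI hPprime : (p.comap (Ideal.Quotient.mk I)).IsPrime := Ideal.IsPrime.comap _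
      have hIP : I ≤ p.comap (Ideal.Quotient.mk I) := by
        intro x hx
        show Ideal.Quotient.mk I x ∈ p
        rw [Ideal.Quotient.eq_zero_iff_mem.mpr hx]
        exact p.zero_mem
      have hmap : (p.comap (Ideal.Quotient.mk I)).map (Ideal.Quotient.mkₐ ℚ I) = p := by
        show (p.comap (Ideal.Quotient.mk I)).map (Ideal.Quotient.mk I) = p
        exact Ideal.map_comap_of_surjective _ Ideal.Quotient.mk_surjective p
      obtain ⟨g, hg0, hgev⟩ := all_algebraic n a hreg (p.comap (Ideal.Quotient.mk I))
        hPprime hIP (X j)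
      refine ⟨g, hg0, ?_⟩
      rw [← hmap, ← Ideal.Quotient.eq_zero_iff_mem]
      set P : Ideal (MvPolynomial (Fin n) ℚ) := p.comap (Ideal.Quotient.mk I) with hPdef
      set e := DoubleQuot.quotQuotEquivQuotOfLEₐ ℚ hIP with he
      have hcoe : ⇑e.toAlgHom = ⇑e := rfl
      have h1 : Ideal.Quotient.mk (P.map (Ideal.Quotient.mkₐ ℚ I))
          (Polynomial.aeval (r j) g) =
          Polynomial.aeval (Ideal.Quotient.mk (P.map (Ideal.Quotient.mkₐ ℚ I)) (r j)) g :=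
        (Polynomial.aeval_algHom_apply
          (Ideal.Quotient.mkₐ ℚ (P.map (Ideal.Quotient.mkₐ ℚ I))) (r j) g).symm
      have h3 : e (Ideal.Quotient.mk (P.map (Ideal.Quotient.mkₐ ℚ I)) (r j))
          = Ideal.Quotient.mk P (X j) :=
        DoubleQuot.quotQuotEquivQuotOfLE_quotQuotMk (X j) hIP
      have h4 := Polynomial.aeval_algHom_apply e.toAlgHom
        (Ideal.Quotient.mk (P.map (Ideal.Quotient.mkₐ ℚ I)) (r j)) g
      rw [hcoe] at h4
      have hz : e (Ideal.Quotient.mk (P.map (Ideal.Quotient.mkₐ ℚ I))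
          (Polynomial.aeval (r j) g)) = 0 := by
        rw [h1, ← h4, h3, hgev]
      exact e.injective (hz.trans (map_zero e).symm)
    -- combine over the finitely many minimal primes
    have hfin : (minimalPrimes (MvPolynomial (Fin n) ℚ ⧸ I)).Finite :=
      minimalPrimes.finite_of_isNoetherianRing _
    choose g hg0 hgmem using hstep
    set G : Polynomial ℚ := ∏ p ∈ hfin.toFinset.attach,
      g p.1 (hfin.mem_toFinset.mp p.2) with hG
    have hG0 : G ≠ 0 := by
      rw [hG]
      exact Finset.prod_ne_zero_iff.mpr fun p _ => hg0 _ _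
    have hGmem : ∀ p ∈ minimalPrimes (MvPolynomial (Fin n) ℚ ⧸ I),
        Polynomial.aeval (r j) G ∈ p := by
      intro p hp
      have hpT : p ∈ hfin.toFinset := hfin.mem_toFinset.mpr hp
      rw [hG, map_prod]
      have hmm := Finset.mul_prod_erase hfin.toFinset.attach
        (fun q => Polynomial.aeval (r j) (g q.1 (hfin.mem_toFinset.mp q.2)))
        (Finset.mem_attach hfin.toFinset ⟨p, hpT⟩)
      rw [← hmm]
      exact Ideal.mul_mem_right _ _ (hgmem p hp)
    have hnil : Polynomial.aeval (r j) G ∈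
        (⊥ : Ideal (MvPolynomial (Fin n) ℚ ⧸ I)).radical := by
      rw [← Ideal.sInf_minimalPrimes]
      exact Ideal.mem_sInf.mpr fun {J} hJ => hGmem J hJ
    obtain ⟨k, hk⟩ := hnil
    rw [Ideal.mem_bot] at hk
    exact ⟨G ^ k, pow_ne_zero _ hG0, by rw [map_pow, hk]⟩
  -- conclude finite dimensionality
  have htop : Algebra.adjoin ℚ (Set.range r) = ⊤ := by
    have h1 : Algebra.adjoin ℚ (Set.range (X : Fin n → MvPolynomial (Fin n) ℚ)) = ⊤ :=
      MvPolynomial.adjoin_range_X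
    have h2 := AlgHom.map_adjoin (Ideal.Quotient.mkₐ ℚ I)
      (Set.range (X : Fin n → MvPolynomial (Fin n) ℚ))
    rw [h1, Algebra.map_top, ← Set.range_comp] at h2
    have h3 : (Ideal.Quotient.mkₐ ℚ I).range = ⊤ :=
      (AlgHom.range_eq_top _).mpr (Ideal.Quotient.mkₐ_surjective ℚ I)
    rw [h3] at h2
    exact h2.symm
  have hfg : (Algebra.adjoin ℚ (Set.range r)).toSubmodule.FG :=
    fg_adjoin_of_finite (Set.finite_range r)
      (fun x hx => by
        obtain ⟨j, rfl⟩ := hx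
        exact (halg j).isIntegral)
  rw [htop, Algebra.top_toSubmodule] at hfg
  exact ⟨hfg⟩

/-- If a₁,…,aₙ is a regular sequence of elements of positive degree (zero
constant term) in ℚ[x₁,…,xₙ], then ℚ[x₁,…,xₙ]/(a₁,…,aₙ) is a
finite-dimensional ℚ-vector space. -/
theorem stmt8 (n : ℕ) (a : Fin n → MvPolynomial (Fin n) ℚ)
    (hconst : ∀ i, constantCoeff (a i) = 0)
    (hreg : IsRegularSeq a) :
    FiniteDimensional ℚ
      (MvPolynomial (Fin n) ℚ ⧸ Ideal.span (Set.range a)) := by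
  exact stmt8_aux n a hreg
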